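/- Let a > 0 and let h_t solve the reverse Loewner equation ∂_t h_t(z) = a/(U_t − h_t(z)), h_0(z) = z, with continuous driving function U and z in the upper half-plane. Define Ψ_t = |h_t'(z)|/Y_t where Y_t = Im(h_t(z)). Then ∂_t (Ψ_t^k) = −2ak Ψ_t^k Y_t²/(X_t² + Y_t²)² for any k, so Ψ_t is nonincreasing; consequently |h_t'(z)| ≤ Y_t/Im(z) ≤ sqrt(2a t/Im(z)² + 1). -/

import Mathlib

open Set

/-- Reverse Loewner flow: with `Ψ_t = |h_t'(z)|/Y_t`, one has
`∂_t(Ψ_t^k) = −2ak Ψ_t^k Y_t²/(X_t²+Y_t²)²`, `Ψ` is nonincreasing, and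
`|h_t'(z)| ≤ Y_t/Im z ≤ sqrt(2at/Im(z)² + 1)`. -/
theorem stmt2 (a : ℝ) (ha : 0 < a) (U : ℝ → ℝ) (hU : Continuous U)
    (z : ℂ) (hz : 0 < z.im) (h h' : ℝ → ℂ)
    (h0 : h 0 = z) (h'0 : h' 0 = 1)
    (hode : ∀ t ∈ Ici (0:ℝ), HasDerivWithinAt h (a / ((U t : ℂ) - h t)) (Ici 0) t)
    (hode' : ∀ t ∈ Ici (0:ℝ),
      HasDerivWithinAt h' (a * h' t / (h t - (U t : ℂ)) ^ 2) (Ici 0) t) :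
    (∀ k : ℝ, ∀ t ∈ Ici (0:ℝ),
      HasDerivWithinAt (fun s => (‖h' s‖ / (h s).im) ^ k)
        (-2 * a * k * (‖h' t‖ / (h t).im) ^ k * (h t).im ^ 2 /
          (((h t).re - U t) ^ 2 + (h t).im ^ 2) ^ 2) (Ici 0) t) ∧
    AntitoneOn (fun s => ‖h' s‖ / (h s).im) (Ici 0) ∧
    (∀ t ∈ Ici (0:ℝ),
      ‖h' t‖ ≤ (h t).im / z.im ∧
      (h t).im / z.im ≤ Real.sqrt (2 * a * t / z.im ^ 2 + 1)) := by
  -- continuity of the flow and its derivative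
  have hcont_h : ContinuousOn h (Ici 0) := fun t ht => (hode t ht).continuousWithinAt
  have hcont_h' : ContinuousOn h' (Ici 0) := fun t ht => (hode' t ht).continuousWithinAt
  have hYcont : ContinuousOn (fun s => (h s).im) (Ici 0) :=
    Complex.continuous_im.comp_continuousOn hcont_h
  -- derivative of `Y = Im h`
  have hY : ∀ t ∈ Ici (0:ℝ), HasDerivWithinAt (fun s => (h s).im)
      (a * (h t).im / (((h t).re - U t)^2 + (h t).im^2)) (Ici 0) t := by
    intro t ht
    have h1 := HasFDerivAt.comp_hasDerivWithinAt t Complex.imCLM.hasFDerivAt (hode t ht)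
    have h2 : ((Complex.imCLM : ℂ →L[ℝ] ℝ) : ℂ → ℝ) ∘ h = fun s => (h s).im := rfl
    rw [h2] at h1
    refine h1.congr_deriv (Eq.symm ?_)
    simp only [Complex.imCLM_apply, Complex.div_im, Complex.normSq_apply, Complex.sub_re,
      Complex.sub_im, Complex.ofReal_re, Complex.ofReal_im]
    ring_nf
  -- positivity of `Y`
  have hYpos : ∀ t ∈ Ici (0:ℝ), 0 < (h t).im := by
    by_contra hcon
    push_neg at hcon
    obtain ⟨t0, ht0, ht0le⟩ := hcon
    have hBsub : {t | t ∈ Ici (0:ℝ) ∧ (h t).im ≤ 0} = Ici 0 ∩ (fun s => (h s).im) ⁻¹' Iic 0 := by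
      ext x; simp [and_comm]
    have hBclosed : IsClosed {t | t ∈ Ici (0:ℝ) ∧ (h t).im ≤ 0} := by
      rw [hBsub]
      exact hYcont.preimage_isClosed_of_isClosed isClosed_Ici isClosed_Iic
    have hBne : {t | t ∈ Ici (0:ℝ) ∧ (h t).im ≤ 0}.Nonempty := ⟨t0, ht0, ht0le⟩
    have hBbd : BddBelow {t | t ∈ Ici (0:ℝ) ∧ (h t).im ≤ 0} := ⟨0, fun x hx => hx.1⟩
    set s0 := sInf {t | t ∈ Ici (0:ℝ) ∧ (h t).im ≤ 0} with hs0def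
    have hs0B : s0 ∈ {t | t ∈ Ici (0:ℝ) ∧ (h t).im ≤ 0} := hBclosed.csInf_mem hBne hBbd
    have hs00 : (0:ℝ) ≤ s0 := hs0B.1
    have hz0 : 0 < (h 0).im := by rw [h0]; exact hz
    have hs0pos : 0 < s0 := by
      rcases hs00.lt_or_eq with hlt | heq
      · exact hlt
      · exact absurd hs0B.2 (by rw [← heq]; linarith)
    have hlt : ∀ u, 0 ≤ u → u < s0 → 0 < (h u).im := by
      intro u hu hus
      by_contra hle
      push_neg at hle
      exact absurd (csInf_le hBbd ⟨hu, hle⟩) (not_le.mpr hus)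
    have hmono : MonotoneOn (fun s => (h s).im) (Icc 0 s0) := by
      apply monotoneOn_of_deriv_nonneg (convex_Icc 0 s0) (hYcont.mono Icc_subset_Ici_self)
      · intro x hx
        rw [interior_Icc] at hx
        exact (((hY x hx.1.le).hasDerivAt (Ici_mem_nhds hx.1)).differentiableAt).differentiableWithinAt
      · intro x hx
        rw [interior_Icc] at hx
        rw [((hY x hx.1.le).hasDerivAt (Ici_mem_nhds hx.1)).deriv]
        have hYx := hlt x hx.1.le hx.2
        positivity
    have := hmono (left_mem_Icc.mpr hs00) ⟨hs00, le_refl s0⟩ hs00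
    simp only at this
    linarith [hs0B.2]
  -- positivity of the denominator
  have hDpos : ∀ t ∈ Ici (0:ℝ), 0 < ((h t).re - U t)^2 + (h t).im^2 := fun t ht =>
    add_pos_of_nonneg_of_pos (sq_nonneg _) (pow_pos (hYpos t ht) 2)
  -- derivative of `normSq h'`
  have hr : ∀ t ∈ Ici (0:ℝ), HasDerivWithinAt (fun s => Complex.normSq (h' s))
      ((2*a*(((h t).re - U t)^2 - (h t).im^2)/((((h t).re - U t)^2 + (h t).im^2)^2))
        * Complex.normSq (h' t)) (Ici 0) t := by
    intro t ht
    have hre' := HasFDerivAt.comp_hasDerivWithinAt t Complex.reCLM.hasFDerivAt (hode' t ht)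
    have him' := HasFDerivAt.comp_hasDerivWithinAt t Complex.imCLM.hasFDerivAt (hode' t ht)
    have h2 : ((Complex.reCLM : ℂ →L[ℝ] ℝ) : ℂ → ℝ) ∘ h' = fun s => (h' s).re := rfl
    have h3 : ((Complex.imCLM : ℂ →L[ℝ] ℝ) : ℂ → ℝ) ∘ h' = fun s => (h' s).im := rfl
    rw [h2] at hre'; rw [h3] at him'
    have hd := (hre'.mul hre').add (him'.mul him')
    have hfun : (((fun s => (h' s).re) * fun s => (h' s).re) + (fun s => (h' s).im) * fun s => (h' s).im)
        = fun s => Complex.normSq (h' s) := by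
      funext s; rw [Complex.normSq_apply]; rfl
    rw [hfun] at hd
    refine hd.congr_deriv (Eq.symm ?_)
    have hD := (hDpos t ht).ne'
    have hN : Complex.normSq ((h t - (U t : ℂ)) ^ 2) ≠ 0 := (Complex.normSq_pos.mpr (pow_ne_zero 2
      (fun e => (hYpos t ht).ne' (by simpa using congrArg Complex.im e)))).ne'
    simp only [Complex.reCLM_apply, Complex.imCLM_apply, Complex.div_re, Complex.div_im,
      Complex.normSq_apply, Complex.mul_re, Complex.mul_im, Complex.sub_re, Complex.sub_im,
      Complex.ofReal_re, Complex.ofReal_im, pow_two] at hD hN ⊢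
    field_simp
    ring
  -- positivity of `normSq h'` via an integrating factor
  have hrpos : ∀ t ∈ Ici (0:ℝ), 0 < Complex.normSq (h' t) := by
    set p : ℝ → ℝ := fun s =>
      2*a*(((h s).re - U s)^2 - (h s).im^2)/((((h s).re - U s)^2 + (h s).im^2)^2) with hpdef
    have hpcont : ContinuousOn p (Ici 0) := by
      apply ContinuousOn.div
      · exact continuousOn_const.mul
          (((Complex.continuous_re.comp_continuousOn hcont_h).sub hU.continuousOn).pow 2 |>.sub
            ((Complex.continuous_im.comp_continuousOn hcont_h).pow 2))
      · exact (((Complex.continuous_re.comp_continuousOn hcont_h).sub hU.continuousOn).pow 2 |>.add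
          ((Complex.continuous_im.comp_continuousOn hcont_h).pow 2)).pow 2
      · intro x hx
        exact pow_ne_zero 2 (hDpos x hx).ne'
    set pe : ℝ → ℝ := fun s => p (max s 0) with hpedef
    have hpecont : Continuous pe :=
      hpcont.comp_continuous (continuous_id.max continuous_const) (fun x => le_max_right x 0)
    have hpe_eq : ∀ t ∈ Ici (0:ℝ), pe t = p t := by
      intro t ht; simp only [hpedef, max_eq_left (mem_Ici.mp ht)]
    set P : ℝ → ℝ := fun t => ∫ s in (0:ℝ)..t, pe s with hPdef
    have hP : ∀ t : ℝ, HasDerivAt P (pe t) t := by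
      intro t
      exact intervalIntegral.integral_hasDerivAt_right
        (hpecont.intervalIntegrable 0 t)
        (hpecont.stronglyMeasurableAtFilter _ _)
        hpecont.continuousAt
    set g : ℝ → ℝ := fun s => Complex.normSq (h' s) * Real.exp (-P s) with hgdef
    have hg' : ∀ x ∈ Ici (0:ℝ), HasDerivWithinAt g 0 (Ici 0) x := by
      intro x hx
      have hE : HasDerivWithinAt (fun s => Real.exp (-P s)) (Real.exp (-P x) * (-pe x)) (Ici 0) x :=
        (((hP x).hasDerivWithinAt).neg).exp
      have := (hr x hx).mul hE
      refine this.congr_deriv (Eq.symm ?_)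
      rw [hpe_eq x hx]
      ring
    have hgconst : ∀ t ∈ Ici (0:ℝ), g t = g 0 := by
      intro t ht
      have hPcont : Continuous P := continuous_iff_continuousAt.mpr fun x => (hP x).continuousAt
      have hgc : ContinuousOn g (Icc 0 t) := by
        apply ContinuousOn.mul
        · exact (Complex.continuous_normSq.comp_continuousOn hcont_h').mono Icc_subset_Ici_self
        · exact (Real.continuous_exp.comp hPcont.neg).continuousOn
      exact constant_of_has_deriv_right_zero hgc
        (fun x hx => (hg' x hx.1).mono (Ici_subset_Ici.mpr hx.1)) t (right_mem_Icc.mpr ht)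
    intro t ht
    have hg0 : g 0 = 1 := by
      simp only [hgdef, hPdef, h'0, intervalIntegral.integral_same, neg_zero, Real.exp_zero,
        map_one, one_mul]
    have hgt := hgconst t ht
    rw [hg0] at hgt
    have hepos := Real.exp_pos (-P t)
    rcases (Complex.normSq_nonneg (h' t)).lt_or_eq with hlt | heq
    · exact hlt
    · exfalso
      simp only [hgdef] at hgt
      rw [← heq] at hgt
      simp at hgt
  have habspos : ∀ t ∈ Ici (0:ℝ), 0 < ‖h' t‖ := by
    intro t ht
    exact norm_pos_iff.mpr (Complex.normSq_pos.mp (hrpos t ht))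
  -- derivative of `|h'|`
  have habs' : ∀ t ∈ Ici (0:ℝ), HasDerivWithinAt (fun s => ‖h' s‖)
      ((2*a*(((h t).re - U t)^2 - (h t).im^2)/((((h t).re - U t)^2 + (h t).im^2)^2))
        * ‖h' t‖ / 2) (Ici 0) t := by
    intro t ht
    have h1 := (hr t ht).sqrt (hrpos t ht).ne'
    have he : (fun s => Real.sqrt (Complex.normSq (h' s))) = fun s => ‖h' s‖ := by
      funext s; exact (Complex.norm_def (h' s)).symm
    rw [he] at h1
    convert h1 using 1
    have hsq : Real.sqrt (Complex.normSq (h' t)) = ‖h' t‖ :=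
      (Complex.norm_def (h' t)).symm
    rw [hsq, ← Complex.sq_norm]
    have hA := (habspos t ht).ne'
    have key : ∀ (c A : ℝ), A ≠ 0 → c * A / 2 = c * A ^ 2 / (2 * A) := by
      intro c A hA; field_simp
    exact key _ _ hA
  -- derivative of `Ψ = |h'|/Y`
  have hΨ : ∀ t ∈ Ici (0:ℝ), HasDerivWithinAt (fun s => ‖h' s‖ / (h s).im)
      (-2 * a * (h t).im ^ 2 * (‖h' t‖ / (h t).im) /
        ((((h t).re - U t)^2 + (h t).im^2)^2)) (Ici 0) t := by
    intro t ht
    have hd := (habs' t ht).div (hY t ht) (hYpos t ht).ne'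
    refine hd.congr_deriv (Eq.symm ?_)
    have hD := (hDpos t ht).ne'
    have hYne := (hYpos t ht).ne'
    field_simp
    ring
  have hΨpos : ∀ t ∈ Ici (0:ℝ), 0 < ‖h' t‖ / (h t).im :=
    fun t ht => div_pos (habspos t ht) (hYpos t ht)
  -- `Ψ` is nonincreasing
  have hanti : AntitoneOn (fun s => ‖h' s‖ / (h s).im) (Ici 0) := by
    apply antitoneOn_of_deriv_nonpos (convex_Ici 0)
    · exact fun t ht => (hΨ t ht).continuousWithinAt
    · intro x hx
      rw [interior_Ici, mem_Ioi] at hx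
      exact (((hΨ x (le_of_lt hx)).hasDerivAt (Ici_mem_nhds hx)).differentiableAt).differentiableWithinAt
    · intro x hx
      rw [interior_Ici, mem_Ioi] at hx
      rw [((hΨ x (le_of_lt hx)).hasDerivAt (Ici_mem_nhds hx)).deriv]
      have h1 : (0:ℝ) ≤ 2 * a * (h x).im ^ 2 * (‖h' x‖ / (h x).im) /
          ((((h x).re - U x)^2 + (h x).im^2)^2) := by
        have := (hΨpos x (le_of_lt hx)).le
        positivity
      have h2 : -2 * a * (h x).im ^ 2 * (‖h' x‖ / (h x).im) /
          ((((h x).re - U x)^2 + (h x).im^2)^2)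
          = -(2 * a * (h x).im ^ 2 * (‖h' x‖ / (h x).im) /
          ((((h x).re - U x)^2 + (h x).im^2)^2)) := by ring
      rw [h2]
      exact neg_nonpos.mpr h1
  refine ⟨?_, hanti, ?_⟩
  · intro k t ht
    have hd := (hΨ t ht).rpow_const (p := k) (Or.inl (hΨpos t ht).ne')
    convert hd using 1
    have hP := (hΨpos t ht).ne'
    have hD := (hDpos t ht).ne'
    rw [Real.rpow_sub (hΨpos t ht), Real.rpow_one]
    have key : ∀ (P D Y E : ℝ), P ≠ 0 → D ≠ 0 →
        -2*a*k*E*Y^2/D = -2*a*Y^2*P/D * k * (E/P) := by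
      intro P D Y E hP hD; field_simp
    exact key _ _ _ _ hP (pow_ne_zero 2 hD)
  · intro t ht
    constructor
    · have h1 := hanti (self_mem_Ici) ht ht
      simp only [h'0, h0, norm_one] at h1
      rw [div_le_div_iff₀ (hYpos t ht) hz] at h1
      rw [le_div_iff₀ hz]
      linarith
    · -- `Y² ≤ (Im z)² + 2at`
      have hφ : AntitoneOn (fun s => (h s).im ^ 2 - 2 * a * s) (Ici 0) := by
        apply antitoneOn_of_deriv_nonpos (convex_Ici 0)
        · apply ContinuousOn.sub
          · exact fun u hu => ((hY u hu).continuousWithinAt).pow 2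
          · exact (continuous_const.mul continuous_id).continuousOn
        · intro x hx
          rw [interior_Ici, mem_Ioi] at hx
          have hda := ((hY x (le_of_lt hx)).hasDerivAt (Ici_mem_nhds hx))
          have hlin : HasDerivAt (fun s : ℝ => 2*a*s) (2*a) x := by
            simpa using (hasDerivAt_id x).const_mul (2*a)
          exact ((hda.pow 2).sub hlin).differentiableAt.differentiableWithinAt
        · intro x hx
          rw [interior_Ici, mem_Ioi] at hx
          have hda := ((hY x (le_of_lt hx)).hasDerivAt (Ici_mem_nhds hx))
          have hlin : HasDerivAt (fun s : ℝ => 2*a*s) (2*a) x := by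
            simpa using (hasDerivAt_id x).const_mul (2*a)
          rw [HasDerivAt.deriv (f := fun s => (h s).im ^ 2 - 2 * a * s) ((hda.pow 2).sub hlin)]
          have hD := hDpos x (le_of_lt hx)
          have hYx := hYpos x (le_of_lt hx)
          have hfrac : (h x).im^2 / (((h x).re - U x)^2 + (h x).im^2) ≤ 1 := by
            rw [div_le_one hD]; nlinarith [sq_nonneg ((h x).re - U x)]
          have e1 : (2:ℝ) * (h x).im ^ (2-1) * (a * (h x).im / (((h x).re - U x)^2 + (h x).im^2)) - 2*a
              = 2*a*((h x).im^2 / (((h x).re - U x)^2 + (h x).im^2)) - 2*a := by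
            ring
          push_cast
          rw [e1]
          nlinarith [hfrac]
      have h2 := hφ self_mem_Ici ht ht
      simp only [h0, mul_zero, sub_zero] at h2
      have hzne : z.im ≠ 0 := hz.ne'
      rw [show Real.sqrt (2*a*t/z.im^2 + 1) = Real.sqrt ((z.im^2 + 2*a*t)/z.im^2) by
        congr 1; field_simp; ring]
      rw [Real.le_sqrt (div_nonneg (hYpos t ht).le hz.le)
        (div_nonneg (by nlinarith [pow_pos hz 2, ht.out, ha.le, mul_nonneg (mul_nonneg (by norm_num : (0:ℝ) ≤ 2) ha.le) ht.out]) (sq_nonneg _))]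
      rw [div_pow, div_le_div_iff_of_pos_right (pow_pos hz 2)]
      linarith
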